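/- For q = 0 and n > m ≥ 0, 1 ≤ p ≤ n: ∑_{r=1}^{n} (-1)^r * C(r - 1, p - 1) * h_m(n, 0, r) = C(n - 1, p - 1) * [(-1)^m * C(n - p - 1, m - p) - C(n - p - 1, n - 1)], where h_m(n, 0, r) = C(n - 1, r - 1) if r ≤ m and 0 if r > m. -/

import Mathlib

/-- Integer-valued binomial coefficient with the convention `C(a, b) = 0` when `b < 0`
or `b > a`. -/
def chZ (a b : ℤ) : ℤ := if 0 ≤ b ∧ b ≤ a then (a.toNat.choose b.toNat : ℤ) else 0

lemma aux_sum (n p : ℕ) (hp : 1 ≤ p) :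
    ∀ m, p ≤ m → m < n →
      ∑ r ∈ Finset.Icc 1 m,
          (-1 : ℤ) ^ r * ((r - 1).choose (p - 1) : ℤ) * ((n - 1).choose (r - 1) : ℤ)
        = (-1 : ℤ) ^ m * ((n - 1).choose (p - 1) : ℤ) * ((n - p - 1).choose (m - p) : ℤ) := by
  refine Nat.le_induction ?_ ?_
  · intro hpn
    rw [Finset.sum_eq_single_of_mem p (by simp [hp])]
    · simp [Nat.sub_self]
    · intro r hr hne
      simp only [Finset.mem_Icc] at hr
      have : r - 1 < p - 1 := by omega
      rw [Nat.choose_eq_zero_of_lt this]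
      ring
  · intro m hpm ih hmn
    have hmn' : m < n := by omega
    rw [Finset.sum_Icc_succ_top (by omega : 1 ≤ m + 1), ih hmn']
    have key : (m.choose (p - 1) : ℤ) * ((n - 1).choose m : ℤ) =
        ((n - 1).choose (p - 1) : ℤ) *
          (((n - p - 1).choose (m + 1 - p) : ℤ) + ((n - p - 1).choose (m - p) : ℤ)) := by
      have h1 : (n - 1).choose m * m.choose (p - 1) =
          (n - 1).choose (p - 1) * (n - 1 - (p - 1)).choose (m - (p - 1)) :=
        Nat.choose_mul (by omega)
      have h2 : n - 1 - (p - 1) = (n - p - 1) + 1 := by omega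
      have h3 : m - (p - 1) = (m - p) + 1 := by omega
      have h4 : m + 1 - p = m - p + 1 := by omega
      rw [h2, h3, Nat.choose_succ_succ] at h1
      rw [h4]
      have h1' : ((n - 1).choose m : ℤ) * (m.choose (p - 1) : ℤ)
          = ((n - 1).choose (p - 1) : ℤ) *
            (((n - p - 1).choose (m - p) : ℤ) + ((n - p - 1).choose (m - p + 1) : ℤ)) := by
        exact_mod_cast h1
      linarith [h1']
    have hms : (m + 1) - 1 = m := by omega
    rw [hms]
    calc (-1:ℤ) ^ m * ((n - 1).choose (p - 1) : ℤ) * ((n - p - 1).choose (m - p) : ℤ)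
          + (-1 : ℤ) ^ (m + 1) * (m.choose (p - 1) : ℤ) * ((n - 1).choose m : ℤ)
        = (-1:ℤ) ^ m * ((n - 1).choose (p - 1) : ℤ) * ((n - p - 1).choose (m - p) : ℤ)
          - (-1 : ℤ) ^ m * ((m.choose (p - 1) : ℤ) * ((n - 1).choose m : ℤ)) := by ring
      _ = (-1 : ℤ) ^ (m + 1) * ((n - 1).choose (p - 1) : ℤ)
            * ((n - p - 1).choose (m + 1 - p) : ℤ) := by rw [key]; ring

theorem stmt_15 (n m p : ℕ) (hmn : m < n) (hp : 1 ≤ p) (hpn : p ≤ n) :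
    ∑ r ∈ Finset.Icc 1 n,
        (-1 : ℤ) ^ r * ((r - 1).choose (p - 1) : ℤ) *
          (if r ≤ m then ((n - 1).choose (r - 1) : ℤ) else 0) =
      ((n - 1).choose (p - 1) : ℤ) *
        ((-1 : ℤ) ^ m * chZ ((n : ℤ) - p - 1) ((m : ℤ) - p) -
          chZ ((n : ℤ) - p - 1) ((n : ℤ) - 1)) := by
  have hch2 : chZ ((n : ℤ) - p - 1) ((n : ℤ) - 1) = 0 := by
    rw [chZ, if_neg]; rintro ⟨h1, h2⟩; omega
  rw [hch2, sub_zero]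
  -- reduce LHS to sum over Icc 1 m
  have hsum : ∑ r ∈ Finset.Icc 1 n,
        (-1 : ℤ) ^ r * ((r - 1).choose (p - 1) : ℤ) *
          (if r ≤ m then ((n - 1).choose (r - 1) : ℤ) else 0)
      = ∑ r ∈ Finset.Icc 1 m,
        (-1 : ℤ) ^ r * ((r - 1).choose (p - 1) : ℤ) * ((n - 1).choose (r - 1) : ℤ) := by
    rw [← Finset.sum_subset (Finset.Icc_subset_Icc_right (by omega : m ≤ n))]
    · apply Finset.sum_congr rfl
      intro r hr
      simp only [Finset.mem_Icc] at hr
      rw [if_pos hr.2]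
    · intro r hr hr'
      simp only [Finset.mem_Icc] at hr hr'
      rw [if_neg (by omega), mul_zero]
  rw [hsum]
  by_cases hpm : p ≤ m
  · have hch1 : chZ ((n : ℤ) - p - 1) ((m : ℤ) - p) = ((n - p - 1).choose (m - p) : ℤ) := by
      rw [chZ, if_pos ⟨by omega, by omega⟩]
      congr 1
      have e1 : ((n : ℤ) - p - 1).toNat = n - p - 1 := by omega
      have e2 : ((m : ℤ) - p).toNat = m - p := by omega
      rw [e1, e2]
    rw [hch1, aux_sum n p hp m hpm hmn]
    ring
  · have hch1 : chZ ((n : ℤ) - p - 1) ((m : ℤ) - p) = 0 := by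
      rw [chZ, if_neg]; rintro ⟨h1, h2⟩; omega
    rw [hch1]
    rw [Finset.sum_eq_zero, mul_zero, mul_zero]
    intro r hr
    simp only [Finset.mem_Icc] at hr
    rw [Nat.choose_eq_zero_of_lt (by omega : r - 1 < p - 1)]
    ring
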